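/- Let h_1 ≤ ... ≤ h_N be positive reals, r < N a positive integer, k and M defined as: (r−k+1)h_{N−k+1} ≥ ∑_{i=1}^{N−k+1} h_i, (r−k)h_{N−k} < ∑_{i=1}^{N−k} h_i, M = (∑_{i=1}^{N−k} h_i)/(r−k). Then with p_i = r(min(h_i,M))/(∑_j min(h_j,M)), the objective satisfies ∑_{i=1}^N h_i²/p_i = ∑_{i=N−k+1}^N h_i² + (r−k)M². -/

import Mathlib

/-- Value of the objective at the capped optimal subsampling probabilities:
`∑ h i ^ 2 / p i = ∑_{i=N-k+1}^N h i ^ 2 + (r - k) M ^ 2`. -/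
theorem objective_value_at_capped_probabilities
    (N r k : ℕ) (hr : 0 < r) (hrN : r < N) (hk : k ≤ r)
    (h : ℕ → ℝ) (hpos : ∀ i ∈ Finset.Icc 1 N, 0 < h i)
    (hmono : ∀ i j, 1 ≤ i → i ≤ j → j ≤ N → h i ≤ h j)
    (hcond1 : 1 ≤ k →
      (∑ i ∈ Finset.Icc 1 (N - k + 1), h i) ≤ ((r : ℝ) - k + 1) * h (N - k + 1))
    (hcond2 : ((r : ℝ) - k) * h (N - k) < ∑ i ∈ Finset.Icc 1 (N - k), h i)
    (M : ℝ) (hM : M = (∑ i ∈ Finset.Icc 1 (N - k), h i) / ((r : ℝ) - k))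
    (p : ℕ → ℝ)
    (hp : ∀ i, p i = (r : ℝ) * min (h i) M / (∑ j ∈ Finset.Icc 1 N, min (h j) M)) :
    (∑ i ∈ Finset.Icc 1 N, (h i) ^ 2 / p i) =
      (∑ i ∈ Finset.Icc (N - k + 1) N, (h i) ^ 2) + ((r : ℝ) - k) * M ^ 2 := by
  have hkN : k < N := lt_of_le_of_lt hk hrN
  -- k < r
  have hkr : k < r := by
    rcases hk.lt_or_eq with h' | h'
    · exact h'
    exfalso
    subst h'
    have hle := hcond1 hr
    have hsub : Finset.Icc 1 (N - k + 1) ⊆ Finset.Icc 1 N :=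
      Finset.Icc_subset_Icc_right (by omega)
    have hlt : h (N - k + 1) < ∑ i ∈ Finset.Icc 1 (N - k + 1), h i := by
      apply Finset.single_lt_sum (i := (N - k + 1)) (j := 1)
      · omega
      · simp [Finset.mem_Icc]
      · simp [Finset.mem_Icc]
      · exact hpos 1 (by simp [Finset.mem_Icc]; omega)
      · intro m hm _; exact (hpos m (hsub hm)).le
    have : ((k : ℝ) - k + 1) * h (N - k + 1) = h (N - k + 1) := by ring
    rw [this] at hle
    linarith
  have hrk : (0:ℝ) < (r:ℝ) - k := by
    have : (k:ℝ) < r := by exact_mod_cast hkr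
    linarith
  set S := ∑ i ∈ Finset.Icc 1 (N - k), h i with hS
  have hsubNk : Finset.Icc 1 (N - k) ⊆ Finset.Icc 1 N :=
    Finset.Icc_subset_Icc_right (by omega)
  have hSpos : 0 < S := by
    apply Finset.sum_pos (fun i hi => hpos i (hsubNk hi))
    rw [Finset.nonempty_Icc]; omega
  have hMpos : 0 < M := by rw [hM]; positivity
  have hSM : S = ((r:ℝ) - k) * M := by rw [hM]; field_simp
  have hlow : ∀ i ∈ Finset.Icc 1 (N - k), h i < M := by
    intro i hi
    simp only [Finset.mem_Icc] at hi
    have h1 : h i ≤ h (N - k) := hmono i (N - k) hi.1 hi.2 (by omega)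
    nlinarith [hcond2]
  have hhigh : ∀ i ∈ Finset.Icc (N - k + 1) N, M ≤ h i := by
    intro i hi
    simp only [Finset.mem_Icc] at hi
    have h1 : 1 ≤ k := by omega
    have hle := hcond1 h1
    have hsum : ∑ i ∈ Finset.Icc 1 (N - k + 1), h i = S + h (N - k + 1) :=
      Finset.sum_Icc_succ_top (by omega) h
    rw [hsum, hSM] at hle
    have hM1 : M ≤ h (N - k + 1) := by nlinarith
    exact le_trans hM1 (hmono (N - k + 1) i (by omega) hi.1 hi.2)
  have hsplit : ∀ f : ℕ → ℝ, ∑ i ∈ Finset.Icc 1 N, f i =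
      ∑ i ∈ Finset.Icc 1 (N - k), f i + ∑ i ∈ Finset.Icc (N - k + 1) N, f i := by
    intro f
    rw [show (1:ℕ) = 0 + 1 from rfl, Finset.Icc_add_one_left_eq_Ioc, Finset.Icc_add_one_left_eq_Ioc,
      Nat.zero_add, Finset.Icc_add_one_left_eq_Ioc]
    exact (Finset.sum_Ioc_consecutive f (Nat.zero_le _) (by omega)).symm
  have hT : ∑ j ∈ Finset.Icc 1 N, min (h j) M = (r:ℝ) * M := by
    rw [hsplit (fun j => min (h j) M)]
    have t1 : ∑ i ∈ Finset.Icc 1 (N - k), min (h i) M = S :=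
      Finset.sum_congr rfl (fun i hi => min_eq_left (hlow i hi).le)
    have t2 : ∑ i ∈ Finset.Icc (N - k + 1) N, min (h i) M = (k:ℝ) * M := by
      rw [Finset.sum_congr rfl (fun i hi => min_eq_right (hhigh i hi)),
        Finset.sum_const, Nat.card_Icc]
      have : N + 1 - (N - k + 1) = k := by omega
      rw [this, nsmul_eq_mul]
    rw [t1, t2, hSM]; ring
  rw [hsplit (fun i => h i ^ 2 / p i)]
  have e1 : ∑ i ∈ Finset.Icc 1 (N - k), h i ^ 2 / p i = ((r:ℝ) - k) * M ^ 2 := by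
    have step : ∀ i ∈ Finset.Icc 1 (N - k), h i ^ 2 / p i = h i * M := by
      intro i hi
      rw [hp i, hT, min_eq_left (hlow i hi).le]
      have hhi : 0 < h i := hpos i (hsubNk hi)
      have hr0 : (0:ℝ) < (r:ℝ) := by exact_mod_cast hr
      field_simp
    rw [Finset.sum_congr rfl step, ← Finset.sum_mul, ← hS, hSM]; ring
  have e2 : ∑ i ∈ Finset.Icc (N - k + 1) N, h i ^ 2 / p i =
      ∑ i ∈ Finset.Icc (N - k + 1) N, h i ^ 2 := by
    apply Finset.sum_congr rfl
    intro i hi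
    rw [hp i, hT, min_eq_right (hhigh i hi)]
    have hr0 : (0:ℝ) < (r:ℝ) := by exact_mod_cast hr
    rw [div_self (by positivity), div_one]
  rw [e1, e2]; ring
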